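/- For every real number y, (1/Re)·u1''(y) + G + B1'(y) = 0. That is, the Hartmann velocity and magnetic-field profiles satisfy the streamwise momentum balance −(1/Re)·u1''(y) + ∂p/∂x − B1'(y) = 0, where the driving pressure gradient is ∂p/∂x = −G. -/

import Mathlib

open Real

lemma hasDerivAt_cosh_mul (a y : ℝ) :
    HasDerivAt (fun x : ℝ => Real.cosh (x * a)) (a * Real.sinh (y * a)) y := by
  have h := (Real.hasDerivAt_cosh (y * a)).comp y ((hasDerivAt_id y).mul_const a)
  simpa [mul_comm, Function.comp_def] using h

lemma hasDerivAt_sinh_mul (a y : ℝ) :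
    HasDerivAt (fun x : ℝ => Real.sinh (x * a)) (a * Real.cosh (y * a)) y := by
  have h := (Real.hasDerivAt_sinh (y * a)).comp y ((hasDerivAt_id y).mul_const a)
  simpa [mul_comm, Function.comp_def] using h

/-- Hartmann flow: the velocity and magnetic-field profiles satisfy the
streamwise momentum balance `(1/Re)·u1''(y) + G + B1'(y) = 0`. -/
theorem hartmann_momentum_balance
    (Re Rem : ℝ) (hRe : 0 < Re) (hRem : 0 < Rem)
    (Ha : ℝ) (hHa : Ha = Real.sqrt (Re * Rem)) (hHapos : 0 < Ha)
    (G : ℝ) (hG : G = 2 * Ha * Real.sinh (Ha / 2) / (Re * (Real.cosh (Ha / 2) - 1)))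
    (u1 B1 : ℝ → ℝ)
    (hu1 : ∀ y : ℝ, u1 y =
      (G * Re / (2 * Ha * Real.tanh (Ha / 2))) * (1 - Real.cosh (y * Ha) / Real.cosh (Ha / 2)))
    (hB1 : ∀ y : ℝ, B1 y = (G / 2) * (Real.sinh (y * Ha) / Real.sinh (Ha / 2) - 2 * y)) :
    ∀ y : ℝ, (1 / Re) * deriv (deriv u1) y + G + deriv B1 y = 0 := by
  intro y
  set C := G * Re / (2 * Ha * Real.tanh (Ha / 2)) with hC
  have hsinh : Real.sinh (Ha / 2) ≠ 0 := by
    have : 0 < Real.sinh (Ha / 2) := Real.sinh_pos_iff.2 (by linarith)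
    linarith
  have hcosh : Real.cosh (Ha / 2) ≠ 0 := by positivity
  -- first derivative of u1
  have hdu1 : deriv u1 = fun z => C * (-(Ha * Real.sinh (z * Ha)) / Real.cosh (Ha / 2)) := by
    funext z
    have h : HasDerivAt u1 (C * (-(Ha * Real.sinh (z * Ha)) / Real.cosh (Ha / 2))) z := by
      have h1 : HasDerivAt (fun x : ℝ =>
          C * (1 - Real.cosh (x * Ha) / Real.cosh (Ha / 2)))
          (C * (-(Ha * Real.sinh (z * Ha)) / Real.cosh (Ha / 2))) z := by
        have := ((hasDerivAt_const z (1:ℝ)).sub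
          ((hasDerivAt_cosh_mul Ha z).div_const (Real.cosh (Ha / 2)))).const_mul C
        simpa [neg_div] using this
      exact h1.congr_of_eventuallyEq (Filter.Eventually.of_forall fun x => (hu1 x))
    exact h.deriv
  have hddu1 : deriv (deriv u1) y
      = C * (-(Ha * (Ha * Real.cosh (y * Ha))) / Real.cosh (Ha / 2)) := by
    rw [hdu1]
    have h : HasDerivAt (fun z : ℝ => C * (-(Ha * Real.sinh (z * Ha)) / Real.cosh (Ha / 2)))
        (C * (-(Ha * (Ha * Real.cosh (y * Ha))) / Real.cosh (Ha / 2))) y := by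
      have := ((((hasDerivAt_sinh_mul Ha y).const_mul Ha).neg).div_const
        (Real.cosh (Ha / 2))).const_mul C
      simpa [neg_div] using this
    exact h.deriv
  have hdB1 : deriv B1 y
      = (G / 2) * (Ha * Real.cosh (y * Ha) / Real.sinh (Ha / 2) - 2) := by
    have h : HasDerivAt B1 ((G / 2) * (Ha * Real.cosh (y * Ha) / Real.sinh (Ha / 2) - 2)) y := by
      have h1 : HasDerivAt (fun x : ℝ =>
          (G / 2) * (Real.sinh (x * Ha) / Real.sinh (Ha / 2) - 2 * x))
          ((G / 2) * (Ha * Real.cosh (y * Ha) / Real.sinh (Ha / 2) - 2)) y := by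
        have := (((hasDerivAt_sinh_mul Ha y).div_const (Real.sinh (Ha / 2))).sub
          ((hasDerivAt_id y).const_mul (2:ℝ))).const_mul (G / 2)
        simpa using this
      exact h1.congr_of_eventuallyEq (Filter.Eventually.of_forall fun x => (hB1 x))
    exact h.deriv
  rw [hddu1, hdB1, hC]
  rw [Real.tanh_eq_sinh_div_cosh]
  field_simp
  ring
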